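/- For every integer n ≥ 2 and every x ∈ [−1,1], one has f₂(x) := T_n(x) + (x+3)/2 − (3(x+1)/(2n²))·T_n′(x) ≥ 0. Moreover, equality is attained only at x = 1 and, when n is odd, also at x = −1. -/

import Mathlib

set_option maxHeartbeats 1600000

open Polynomial Real

section AGCHelpers


lemma agc_deriv_nonneg (f f' : ℝ → ℝ) (hd : ∀ x, HasDerivAt f (f' x) x)
    (h0 : f 0 = 0) (hf' : ∀ x, 0 ≤ x → 0 ≤ f' x) : ∀ x, 0 ≤ x → 0 ≤ f x := by
  intro x hx
  have hdiff : Differentiable ℝ f := fun y => (hd y).differentiableAt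
  have hmono : MonotoneOn f (Set.Ici (0:ℝ)) := by
    apply monotoneOn_of_deriv_nonneg (convex_Ici 0) hdiff.continuous.continuousOn
      (fun y _ => hdiff.differentiableAt.differentiableWithinAt)
    intro y hy
    rw [interior_Ici] at hy
    rw [(hd y).deriv]
    exact hf' y (le_of_lt hy)
  have := hmono (Set.self_mem_Ici) (Set.mem_Ici.2 hx) hx
  linarith [h0 ▸ this]

lemma agc_sin_ge (x : ℝ) (hx : 0 ≤ x) : x - x^3/6 ≤ sin x := by
  have := agc_deriv_nonneg (fun y => sin y - (y - y^3/6)) (fun y => cos y - (1 - y^2/2))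
    (fun y => by
      have h1 : HasDerivAt (fun y : ℝ => sin y) (cos y) y := hasDerivAt_sin y
      have h2 : HasDerivAt (fun y : ℝ => y - y^3/6) (1 - y^2/2) y := by
        have := ((hasDerivAt_pow 3 y).div_const 6)
        have h3 := (hasDerivAt_id y).sub this
        exact h3.congr_deriv (by ring)
      exact h1.sub h2)
    (by simp) (fun y hy => by nlinarith [one_sub_sq_div_two_le_cos (x := y)]) x hx
  linarith

lemma agc_cos_le (x : ℝ) (hx : 0 ≤ x) : cos x ≤ 1 - x^2/2 + x^4/24 := by
  have := agc_deriv_nonneg (fun y => 1 - y^2/2 + y^4/24 - cos y)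
    (fun y => -y + y^3/6 + sin y)
    (fun y => by
      have h1 : HasDerivAt (fun y : ℝ => 1 - y^2/2 + y^4/24) (-y + y^3/6) y := by
        have h2 := ((hasDerivAt_pow 2 y).div_const 2)
        have h3 := ((hasDerivAt_pow 4 y).div_const 24)
        have := ((hasDerivAt_const y (1:ℝ)).sub h2).add h3
        exact this.congr_deriv (by ring)
      have := h1.sub (hasDerivAt_cos y)
      exact this.congr_deriv (by ring))
    (by simp) (fun y hy => by nlinarith [agc_sin_ge y hy]) x hx
  linarith

lemma agc_sin_le (x : ℝ) (hx : 0 ≤ x) : sin x ≤ x - x^3/6 + x^5/120 := by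
  have := agc_deriv_nonneg (fun y => y - y^3/6 + y^5/120 - sin y)
    (fun y => 1 - y^2/2 + y^4/24 - cos y)
    (fun y => by
      have h1 : HasDerivAt (fun y : ℝ => y - y^3/6 + y^5/120) (1 - y^2/2 + y^4/24) y := by
        have h2 := ((hasDerivAt_pow 3 y).div_const 6)
        have h3 := ((hasDerivAt_pow 5 y).div_const 120)
        have := ((hasDerivAt_id y).sub h2).add h3
        exact this.congr_deriv (by ring)
      exact h1.sub (hasDerivAt_sin y))
    (by simp) (fun y hy => by nlinarith [agc_cos_le y hy]) x hx
  linarith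

lemma agc_fin (N u : ℝ) (hN : 3 ≤ N) (hu : 0 < u) :
    0 < (52/375)*N^5*u^5 - (311/375)*N^3*u^5 - (1/8)*N*u^5 := by
  have h9 : 9 ≤ N^2 := by nlinarith
  have hN3 : (0:ℝ) < N^3 := by positivity
  have hu5 : (0:ℝ) < u^5 := by positivity
  have h95 : 9*N^3 ≤ N^5 := by nlinarith [mul_le_mul_of_nonneg_left h9 hN3.le]
  nlinarith [mul_le_mul_of_nonneg_right h95 hu5.le, mul_pos hN3 hu5,
    mul_pos (show (0:ℝ) < N by linarith) hu5]

lemma agc_polyB (N u s c C2 S2 : ℝ) (hN : 3 ≤ N) (hu : 0 < u) (hv : N*u ≤ 6/5)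
    (hs1 : u - u^3/6 ≤ s) (hs2 : s ≤ u) (hs3 : s ≤ u - u^3/6 + u^5/120)
    (hc1 : 1 - u^2/2 ≤ c) (hc2 : c ≤ 1 - u^2/2 + u^4/24) (hc3 : c ≤ 1)
    (hpyth : s^2 + c^2 = 1)
    (hC2 : 1 - 2*(N*u)^2 + (2/3)*(N*u)^4 - (4/45)*(N*u)^6 ≤ C2)
    (hS2 : S2 ≤ 2*(N*u) - (4/3)*(N*u)^3 + (4/15)*(N*u)^5) :
    0 < N*s*(1+c^2) + N*s*C2 - 3/2*c*S2 := by
  have hN0 : (0:ℝ) < N := by linarith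
  have h3u : 3*u ≤ N*u := mul_le_mul_of_nonneg_right hN hu.le
  have hu2 : u ≤ 2/5 := by linarith
  have hw2 : u^2 ≤ 4/25 := by
    have := mul_le_mul hu2 hu2 hu.le (by norm_num : (0:ℝ) ≤ 2/5)
    linarith [sq_nonneg u, this]
  have hc0 : (0:ℝ) ≤ c := by linarith
  have hu3 : u*u^2 ≤ u*(4/25) := mul_le_mul_of_nonneg_left hw2 hu.le
  have hs0 : 0 < s := by nlinarith [hs1, hu3, hu]
  have hG1 : N*s*(1 - 2*(N*u)^2 + (2/3)*(N*u)^4 - (4/45)*(N*u)^6) ≤ N*s*C2 :=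
    mul_le_mul_of_nonneg_left hC2 (by positivity)
  have hG2 : 3/2*c*S2 ≤ 3/2*c*(2*(N*u) - (4/3)*(N*u)^3 + (4/15)*(N*u)^5) :=
    mul_le_mul_of_nonneg_left hS2 (by positivity)
  have hD1 : u^3/3 - u^5/24 ≤ s - u*c := by linarith [mul_le_mul_of_nonneg_left hc2 hu.le]
  have hD2 : s - u*c ≤ u^3/3 + u^5/120 := by linarith [mul_le_mul_of_nonneg_left hc1 hu.le]
  have h1 : N*u^3 - (1/8)*N*u^5 ≤ 3*N*(s - u*c) := by
    linarith [mul_le_mul_of_nonneg_left hD1 (show (0:ℝ) ≤ 3*N by positivity)]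
  have h2 : -((2/3)*N^3*u^5 + (1/60)*N^3*u^7) ≤ -(2*N^3*u^2*(s - u*c)) := by
    linarith [mul_le_mul_of_nonneg_left hD2 (show (0:ℝ) ≤ 2*N^3*u^2 by positivity)]
  have h3 : N*s^3 ≤ N*u^3 :=
    mul_le_mul_of_nonneg_left (pow_le_pow_left₀ hs0.le hs2 3) hN0.le
  have h4 : (2/3)*N^5*u^5 - (1/9)*N^5*u^7 ≤ (2/3)*N^5*u^4*s := by
    linarith [mul_le_mul_of_nonneg_left hs1 (show (0:ℝ) ≤ (2/3)*N^5*u^4 by positivity)]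
  have h5 : (2/5)*N^5*u^5*c ≤ (2/5)*N^5*u^5 := by
    linarith [mul_le_mul_of_nonneg_left hc3 (show (0:ℝ) ≤ (2/5)*N^5*u^5 by positivity)]
  have h6 : (4/45)*N^7*u^6*s ≤ (4/45)*N^7*u^7 := by
    linarith [mul_le_mul_of_nonneg_left hs2 (show (0:ℝ) ≤ (4/45)*N^7*u^6 by positivity)]
  have hz2 : N^2*u^2 ≤ 36/25 := by
    have := mul_le_mul hv hv (by positivity : (0:ℝ) ≤ N*u) (by norm_num : (0:ℝ) ≤ 6/5)
    linarith [this]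
  have h7a : (4/45)*N^7*u^7 ≤ (16/125)*N^5*u^5 := by
    linarith [mul_le_mul_of_nonneg_left hz2 (show (0:ℝ) ≤ (4/45)*N^5*u^5 by positivity)]
  have h7b : (1/9)*N^5*u^7 ≤ (4/25)*N^3*u^5 := by
    linarith [mul_le_mul_of_nonneg_left hz2 (show (0:ℝ) ≤ (1/9)*N^3*u^5 by positivity)]
  have h7c : (1/60)*N^3*u^7 ≤ (1/375)*N^3*u^5 := by
    linarith [mul_le_mul_of_nonneg_left hw2 (show (0:ℝ) ≤ (1/60)*N^3*u^5 by positivity)]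
  have hfin := agc_fin N u hN hu
  have hcsq : c^2 = 1 - s^2 := by linarith
  have hid : N*s*(1+c^2) + N*s*(1 - 2*(N*u)^2 + (2/3)*(N*u)^4 - (4/45)*(N*u)^6)
      - 3/2*c*(2*(N*u) - (4/3)*(N*u)^3 + (4/15)*(N*u)^5)
      = 3*N*(s - u*c) - (2*N^3*u^2*(s - u*c)) - N*s^3 + (2/3)*N^5*u^4*s
        - (2/5)*N^5*u^5*c - (4/45)*N^7*u^6*s := by rw [hcsq]; ring
  linarith [hG1, hG2, hid.ge, hid.le, h1, h2, h3, h4, h5, h6, h7a, h7b, h7c, hfin]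

lemma agc_caseB (N u : ℝ) (hN : 3 ≤ N) (hu : 0 < u) (hv : N*u ≤ 6/5) :
    0 < N*sin u*(1+cos u^2) + N*sin u*cos (2*(N*u)) - 3/2*cos u*sin (2*(N*u)) := by
  have hv0 : 0 < N*u := by nlinarith
  have hsinv0 : 0 ≤ sin (N*u) := by
    apply sin_nonneg_of_nonneg_of_le_pi hv0.le
    nlinarith [pi_gt_three]
  have hsinv : sin (N*u) ≤ N*u - (N*u)^3/6 + (N*u)^5/120 := agc_sin_le (N*u) hv0.le
  have hB2 : (N*u - (N*u)^3/6 + (N*u)^5/120)^2 ≤ (N*u)^2 - (N*u)^4/3 + (2/45)*(N*u)^6 := by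
    have h40 : (0:ℝ) ≤ 40 - (N*u)^2 := by nlinarith
    nlinarith [mul_nonneg (pow_nonneg hv0.le 8) h40]
  have hcos2v : 1 - 2*(N*u)^2 + (2/3)*(N*u)^4 - (4/45)*(N*u)^6 ≤ cos (2*(N*u)) := by
    have h1 : cos (2*(N*u)) = 1 - 2 * sin (N*u) ^ 2 := by
      rw [cos_two_mul]; nlinarith [sin_sq_add_cos_sq (N*u)]
    have hsq : sin (N*u)^2 ≤ (N*u - (N*u)^3/6 + (N*u)^5/120)^2 :=
      pow_le_pow_left₀ hsinv0 hsinv 2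
    rw [h1]; nlinarith [hsq, hB2]
  have hsin2v : sin (2*(N*u)) ≤ 2*(N*u) - (4/3)*(N*u)^3 + (4/15)*(N*u)^5 := by
    have := agc_sin_le (2*(N*u)) (by positivity)
    nlinarith [this]
  exact agc_polyB N u (sin u) (cos u) (cos (2*(N*u))) (sin (2*(N*u))) hN hu hv
    (agc_sin_ge u hu.le) (sin_lt hu).le (agc_sin_le u hu.le)
    one_sub_sq_div_two_le_cos (agc_cos_le u hu.le) (cos_le_one u)
    (sin_sq_add_cos_sq u) hcos2v hsin2v

lemma agc_caseA (N u : ℝ) (hN : 2 ≤ N) (hu : 0 < u) (huu : u < π/2) (hv : 6/5 ≤ N*u) :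
    0 < N*sin u*(1+cos u^2) + N*sin u*cos (2*(N*u)) - 3/2*cos u*sin (2*(N*u)) := by
  have hs0 : 0 < sin u := sin_pos_of_pos_of_lt_pi hu (by linarith [pi_pos])
  have hc0 : 0 < cos u := cos_pos_of_mem_Ioo ⟨by linarith, huu⟩
  set s := sin u
  set c := cos u
  have hpyth : s^2 + c^2 = 1 := sin_sq_add_cos_sq u
  have hs2le : s^2 ≤ 1 := by nlinarith [sq_nonneg c]
  have hkey : 9/4 < N^2*s^2*(3 - s^2) := by
    have hN2 : 4 ≤ N^2 := by nlinarith
    rcases le_or_gt (1/2 : ℝ) (s^2) with h | h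
    · have h1 : 5/4 ≤ s^2*(3 - s^2) := by
        nlinarith [mul_nonneg (by linarith : (0:ℝ) ≤ s^2 - 1/2) (by linarith : (0:ℝ) ≤ 5/2 - s^2)]
      nlinarith [mul_le_mul hN2 h1 (by norm_num) (by nlinarith : (0:ℝ) ≤ N^2)]
    · have hupi4 : u ≤ π/4 := by
        by_contra hcon
        push_neg at hcon
        have hlt : sin (π/4) < sin u :=
          sin_lt_sin_of_lt_of_le_pi_div_two (by linarith [pi_pos]) huu.le hcon
        rw [sin_pi_div_four] at hlt
        have h2 : (Real.sqrt 2/2)^2 = 1/2 := by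
          rw [div_pow, Real.sq_sqrt (by norm_num : (0:ℝ) ≤ 2)]; norm_num
        nlinarith [hlt, Real.sqrt_nonneg 2]
      have h2 : u^2 ≤ π^2/16 := by nlinarith [pi_pos]
      have h1 : u - u^3/6 ≤ s := agc_sin_ge u hu.le
      have hu3 : u*u^2 ≤ u*(π^2/16) := mul_le_mul_of_nonneg_left h2 hu.le
      have hsge : u*(1 - π^2/96) ≤ s := by nlinarith [hu3, h1]
      have hpi : π < 3.15 := pi_lt_d2
      have h96 : (0.89:ℝ) ≤ 1 - π^2/96 := by nlinarith [pi_gt_three, pi_pos]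
      have hNs : 6/5*(0.89:ℝ) ≤ N*s := by
        have hstep := mul_le_mul_of_nonneg_left hsge (by linarith : (0:ℝ) ≤ N)
        have hstep2 := mul_le_mul_of_nonneg_right hv (by linarith : (0:ℝ) ≤ 1 - π^2/96)
        have hstep3 := mul_le_mul_of_nonneg_left h96 (by norm_num : (0:ℝ) ≤ 6/5)
        nlinarith [hstep, hstep2, hstep3]
      have hss : (1.14:ℝ) ≤ N^2*s^2 := by
        nlinarith [mul_le_mul hNs hNs (by norm_num) (by positivity : (0:ℝ) ≤ N*s)]
      nlinarith [mul_nonneg (by linarith : (0:ℝ) ≤ N^2*s^2 - 1.14) (by linarith : (0:ℝ) ≤ 3 - s^2 - 5/2)]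
  have hQ : (N*s*cos (2*(N*u)) - 3/2*c*sin (2*(N*u)))^2 ≤ N^2*s^2 + 9/4*c^2 := by
    nlinarith [sq_nonneg (N*s*sin (2*(N*u)) + 3/2*c*cos (2*(N*u))), sin_sq_add_cos_sq (2*(N*u))]
  have hP : 0 < N*s*(1+c^2) := by positivity
  have hPQ : N^2*s^2 + 9/4*c^2 < (N*s*(1+c^2))^2 := by
    have expand : (N*s*(1+c^2))^2 - (N^2*s^2 + 9/4*c^2) = c^2*(N^2*s^2*(3-s^2) - 9/4)
        + N^2*s^2*c^2*(s^2+c^2-1) := by ring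
    rw [hpyth] at expand
    nlinarith [expand, mul_pos (mul_pos hc0 hc0) (by linarith : (0:ℝ) < N^2*s^2*(3-s^2) - 9/4)]
  nlinarith [hQ, hPQ, hP, sq_nonneg (N*s*(1+c^2) + (N*s*cos (2*(N*u)) - 3/2*c*sin (2*(N*u))))]

end AGCHelpers

/-- The `n`-th Chebyshev polynomial of the first kind, as a real polynomial. -/
noncomputable def chebT (n : ℕ) : Polynomial ℝ := Polynomial.Chebyshev.T ℝ (n : ℤ)

lemma agc_U_eval_one : ∀ k : ℕ, (Polynomial.Chebyshev.U ℝ (k:ℤ)).eval 1 = k+1 := by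
  intro k
  induction k using Nat.twoStepInduction with
  | zero => simp [Polynomial.Chebyshev.U_zero]
  | one => simp [Polynomial.Chebyshev.U_one]; norm_num
  | more k ih1 ih2 =>
    have h := Polynomial.Chebyshev.U_add_two ℝ (k:ℤ)
    have hcast : ((k:ℤ)+2) = ((k+2:ℕ):ℤ) := by push_cast; ring
    rw [hcast] at h
    rw [h]
    simp only [eval_sub, eval_mul, eval_ofNat, eval_X]
    rw [show ((k:ℤ)+1) = ((k+1:ℕ):ℤ) by push_cast; ring] at *
    rw [ih1, ih2]
    push_cast
    ring
lemma agc_U_eval_negone : ∀ k : ℕ, (Polynomial.Chebyshev.U ℝ (k:ℤ)).eval (-1) = (-1)^k*(k+1) := by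
  intro k
  induction k using Nat.twoStepInduction with
  | zero => simp [Polynomial.Chebyshev.U_zero]
  | one => simp [Polynomial.Chebyshev.U_one]; norm_num
  | more k ih1 ih2 =>
    have h := Polynomial.Chebyshev.U_add_two ℝ (k:ℤ)
    have hcast : ((k:ℤ)+2) = ((k+2:ℕ):ℤ) := by push_cast; ring
    rw [hcast] at h
    rw [h]
    simp only [eval_sub, eval_mul, eval_ofNat, eval_X]
    rw [show ((k:ℤ)+1) = ((k+1:ℕ):ℤ) by push_cast; ring] at *
    rw [ih1, ih2]
    push_cast
    ring

lemma agc_T_eval_cos (n : ℕ) (θ : ℝ) : (chebT n).eval (cos θ) = cos (n*θ) := by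
  have := Polynomial.Chebyshev.T_real_cos θ (n:ℤ)
  rw [chebT, this]
  norm_num

lemma agc_T_deriv (n : ℕ) (hn : 1 ≤ n) :
    derivative (chebT n) = (n:ℝ[X]) * Polynomial.Chebyshev.U ℝ ((n:ℤ)-1) := by
  rw [chebT, Polynomial.Chebyshev.T_derivative_eq_U]
  norm_num

lemma agc_T_deriv_eval_cos (n : ℕ) (hn : 1 ≤ n) (θ : ℝ) :
    (derivative (chebT n)).eval (cos θ) * sin θ = n * sin (n*θ) := by
  rw [agc_T_deriv n hn]
  simp only [eval_mul, eval_natCast]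
  have := Polynomial.Chebyshev.U_real_cos θ ((n:ℤ)-1)
  rw [mul_assoc, this]
  norm_num

lemma agc_T_eval_one (n : ℕ) : (chebT n).eval 1 = 1 := by
  have := agc_T_eval_cos n 0
  simpa using this

lemma agc_T_eval_negone (n : ℕ) : (chebT n).eval (-1) = (-1)^n := by
  have := agc_T_eval_cos n π
  rw [cos_pi] at this
  rw [this]
  have h := Real.cos_nat_mul_pi_sub 0 n
  simpa using h

lemma agc_T_deriv_eval_one (n : ℕ) (hn : 1 ≤ n) :
    (derivative (chebT n)).eval 1 = (n:ℝ)^2 := by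
  rw [agc_T_deriv n hn]
  simp only [eval_mul, eval_natCast]
  rw [show ((n:ℤ)-1) = ((n-1:ℕ):ℤ) by omega]
  rw [agc_U_eval_one (n-1)]
  have : ((n-1:ℕ):ℝ) = (n:ℝ)-1 := by
    have : (1:ℕ) ≤ n := hn
    push_cast [Nat.cast_sub this]
    ring
  rw [this]; ring

lemma agc_T_deriv_eval_negone (n : ℕ) (hn : 1 ≤ n) :
    (derivative (chebT n)).eval (-1) = (-1)^(n+1)*(n:ℝ)^2 := by
  rw [agc_T_deriv n hn]
  simp only [eval_mul, eval_natCast]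
  rw [show ((n:ℤ)-1) = ((n-1:ℕ):ℤ) by omega]
  rw [agc_U_eval_negone (n-1)]
  have h1 : ((n-1:ℕ):ℝ) = (n:ℝ)-1 := by
    push_cast [Nat.cast_sub hn]
    ring
  have h2 : ((-1:ℝ))^(n-1) = (-1)^(n+1) := by
    rcases Nat.exists_eq_add_of_le hn with ⟨m, rfl⟩
    rw [show 1+m-1 = m by omega]
    rw [show 1+m+1 = m+2 by omega]
    rw [pow_add]
    norm_num
  rw [h1, h2]; ring

/-- The Askey–Gasper inequality in Chebyshev form: for every integer `n ≥ 2` and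
every `x ∈ [-1,1]`, `f₂(x) := T_n(x) + (x+3)/2 - (3(x+1)/(2n²)) T_n'(x) ≥ 0`,
with equality only at `x = 1` and, when `n` is odd, also at `x = -1`. -/
theorem askey_gasper_chebyshev (n : ℕ) (hn : 2 ≤ n) (x : ℝ) (hx : x ∈ Set.Icc (-1 : ℝ) 1)
    (f₂ : ℝ → ℝ)
    (hf₂ : ∀ y : ℝ, f₂ y =
      (chebT n).eval y + (y + 3) / 2 - 3 * (y + 1) / (2 * (n : ℝ) ^ 2) * (derivative (chebT n)).eval y) :
    0 ≤ f₂ x ∧ (f₂ x = 0 ↔ x = 1 ∨ (Odd n ∧ x = -1)) := by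
  obtain ⟨hxl, hxr⟩ := hx
  have hn1 : 1 ≤ n := by omega
  have hnR : (2:ℝ) ≤ (n:ℝ) := by exact_mod_cast hn
  have hn0 : (n:ℝ) ≠ 0 := by linarith
  by_cases hntwo : n = 2
  · -- n = 2 : f₂ y = (y-1)^2/2
    subst hntwo
    have hT2 : chebT 2 = 2*X^2 - 1 := by
      rw [chebT]
      exact_mod_cast Polynomial.Chebyshev.T_two ℝ
    have hD2 : derivative (chebT 2) = 4*X := by
      rw [agc_T_deriv 2 (by norm_num)]
      norm_num [Polynomial.Chebyshev.U_one]
      ring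
    have hval : f₂ x = (x-1)^2/2 := by
      rw [hf₂ x, hD2, hT2]
      simp only [eval_sub, eval_mul, eval_add, eval_pow, eval_X, eval_one, eval_ofNat]
      norm_num
      ring
    constructor
    · rw [hval]; positivity
    · rw [hval]
      constructor
      · intro h
        left
        have : (x-1)^2 = 0 := by linarith
        have := pow_eq_zero_iff (n := 2) (by norm_num) |>.1 this
        linarith
      · rintro (rfl | ⟨hodd, rfl⟩)
        · norm_num
        · exact absurd hodd (by decide)
  · -- n ≥ 3
    have hn3 : 3 ≤ n := by omega
    have hn3R : (3:ℝ) ≤ (n:ℝ) := by exact_mod_cast hn3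
    by_cases hx1 : x = 1
    · subst hx1
      have hval : f₂ 1 = 0 := by
        rw [hf₂ 1, agc_T_eval_one n, agc_T_deriv_eval_one n hn1]
        field_simp
        ring
      exact ⟨hval.ge, by rw [hval]; simp⟩
    by_cases hxm1 : x = -1
    · subst hxm1
      have hval : f₂ (-1) = (-1)^n + 1 := by
        rw [hf₂ (-1), agc_T_eval_negone n, agc_T_deriv_eval_negone n hn1]
        norm_num
      rcases Nat.even_or_odd n with he | ho
      · have hpow : ((-1:ℝ))^n = 1 := he.neg_one_pow
        rw [hval, hpow]
        refine ⟨by norm_num, ?_⟩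
        constructor
        · intro h; norm_num at h
        · rintro (h | ⟨hodd, -⟩)
          · norm_num at h
          · exact absurd hodd (Nat.not_odd_iff_even.2 he)
      · have hpow : ((-1:ℝ))^n = -1 := ho.neg_one_pow
        rw [hval, hpow]
        refine ⟨by norm_num, ?_⟩
        constructor
        · intro _; exact Or.inr ⟨ho, rfl⟩
        · intro _; norm_num
    · -- interior
      have hxl' : -1 < x := lt_of_le_of_ne hxl (Ne.symm hxm1)
      have hxr' : x < 1 := lt_of_le_of_ne hxr hx1
      set θ := Real.arccos x with hθdef
      have hθ0 : 0 < θ := Real.arccos_pos.2 hxr'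
      have hθπ : θ < π := by
        rcases lt_or_eq_of_le (Real.arccos_le_pi x) with h | h
        · exact h
        · exact absurd (Real.arccos_eq_pi.1 h) (by linarith)
      have hcos : cos θ = x := Real.cos_arccos hxl hxr
      have hsθ : 0 < sin θ := Real.sin_pos_of_pos_of_lt_pi hθ0 hθπ
      have hT : (chebT n).eval x = cos ((n:ℝ)*θ) := by rw [← hcos]; exact agc_T_eval_cos n θ
      have hD : (derivative (chebT n)).eval x * sin θ = (n:ℝ) * sin ((n:ℝ)*θ) := by
        rw [← hcos]; exact agc_T_deriv_eval_cos n hn1 θ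
      have hB : (derivative (chebT n)).eval x = (n:ℝ) * sin ((n:ℝ)*θ) / sin θ := by
        rw [eq_div_iff hsθ.ne']; exact hD
      -- the trig positivity
      have hu0 : 0 < θ/2 := by linarith
      have huπ : θ/2 < π/2 := by linarith
      have hcu : 0 < cos (θ/2) := Real.cos_pos_of_mem_Ioo ⟨by linarith, huπ⟩
      have hg : 0 < (n:ℝ)*sin (θ/2)*(1+cos (θ/2)^2) + (n:ℝ)*sin (θ/2)*cos (2*((n:ℝ)*(θ/2)))
          - 3/2*cos (θ/2)*sin (2*((n:ℝ)*(θ/2))) := by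
        rcases le_or_gt ((n:ℝ)*(θ/2)) (6/5) with h | h
        · exact agc_caseB (n:ℝ) (θ/2) hn3R hu0 h
        · exact agc_caseA (n:ℝ) (θ/2) (by linarith) hu0 huπ h.le
      have hG : 0 < 2*(n:ℝ)*sin θ*cos ((n:ℝ)*θ) + (n:ℝ)*sin θ*(x+3) - 3*(x+1)*sin ((n:ℝ)*θ) := by
        have hsin2 : sin θ = 2*sin (θ/2)*cos (θ/2) := by
          rw [show θ = 2*(θ/2) by ring, Real.sin_two_mul]
          ring_nf
        have hcos2 : x = 2*cos (θ/2)^2 - 1 := by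
          rw [← hcos, show θ = 2*(θ/2) by ring, Real.cos_two_mul]
          ring_nf
        have hnθc : cos ((n:ℝ)*θ) = cos (2*((n:ℝ)*(θ/2))) := by ring_nf
        have hnθs : sin ((n:ℝ)*θ) = sin (2*((n:ℝ)*(θ/2))) := by ring_nf
        have hid : 2*(n:ℝ)*sin θ*cos ((n:ℝ)*θ) + (n:ℝ)*sin θ*(x+3) - 3*(x+1)*sin ((n:ℝ)*θ)
            = 4*cos (θ/2)*((n:ℝ)*sin (θ/2)*(1+cos (θ/2)^2)
              + (n:ℝ)*sin (θ/2)*cos (2*((n:ℝ)*(θ/2))) - 3/2*cos (θ/2)*sin (2*((n:ℝ)*(θ/2)))) := by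
          rw [hsin2, hnθc, hnθs, hcos2]
          ring
        rw [hid]
        positivity
      have hfval : f₂ x = (2*(n:ℝ)*sin θ*cos ((n:ℝ)*θ) + (n:ℝ)*sin θ*(x+3) - 3*(x+1)*sin ((n:ℝ)*θ))
          / (2*(n:ℝ)*sin θ) := by
        rw [hf₂ x, hT, hB]
        field_simp
      have hpos : 0 < f₂ x := by
        rw [hfval]
        positivity
      refine ⟨hpos.le, ?_⟩
      constructor
      · intro h; exact absurd h hpos.ne'
      · rintro (h | ⟨-, h⟩)
        · exact absurd h hx1
        · exact absurd h hxm1
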